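/- Let n be a positive integer. Then the automorphism group of the multiplicative monoid (ℤ/nℤ, ·) is isomorphic, as a group, to the direct product over the distinct primes p dividing n of the automorphism groups of the multiplicative monoids (ℤ/p^{e_p}ℤ, ·), where p^{e_p} is the exact power of p dividing n: Aut(ℤ/nℤ, ·) ≅ ∏_{p^{e_p} ∥ n} Aut(ℤ/p^{e_p}ℤ, ·). -/

import Mathlib

section PiAux

variable {ι : Type*} [DecidableEq ι] {M : ι → Type*} [∀ i, MonoidWithZero (M i)]

lemma single_mul_single (i : ι) (x y : M i) :
    Pi.single i x * Pi.single i y = Pi.single i (x * y) := by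
  funext j
  by_cases h : j = i
  · subst h; simp
  · simp [Pi.single_eq_of_ne h]

lemma eq_single_of_mul_single {a : ∀ i, M i} {i : ι}
    (h : a * Pi.single i 1 = a) : a = Pi.single i (a i) := by
  funext j
  by_cases hj : j = i
  · subst hj; simp
  · have := congrFun h j
    simp only [Pi.mul_apply, Pi.single_eq_of_ne hj, mul_zero] at this
    simp [Pi.single_eq_of_ne hj, ← this]

lemma mul_single_self (i : ι) (x : M i) :
    Pi.single i x * Pi.single i 1 = Pi.single i x := by
  rw [single_mul_single, mul_one]

lemma single_one_mul_of_eq_one {e : ∀ i, M i} {j : ι} (hj : e j = 1) :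
    Pi.single j (1 : M j) * e = Pi.single j 1 := by
  funext k
  by_cases hk : k = j
  · subst hk; simp [hj]
  · simp [Pi.single_eq_of_ne hk]

variable [∀ i, Nontrivial (M i)]

lemma mulaut_map_zero (φ : MulAut (∀ i, M i)) : φ 0 = 0 := by
  have h : φ 0 * (0 : ∀ i, M i) = φ 0 := by
    have := φ.map_mul 0 (φ.symm 0)
    simpa [zero_mul] using this.symm
  rw [← h, mul_zero]

lemma single_one_ne_zero (i : ι) : (Pi.single i (1 : M i) : ∀ i, M i) ≠ 0 := by
  intro h
  have := congrFun h i
  simp at this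

variable (hidem : ∀ i (x : M i), x * x = x → x = 0 ∨ x = 1)

include hidem in
/-- A multiplicative automorphism of the product maps each coordinate idempotent to
a coordinate idempotent. -/
lemma exists_single_eq (φ : MulAut (∀ i, M i)) (i : ι) :
    ∃ j, φ (Pi.single i 1) = Pi.single j 1 ∧ φ.symm (Pi.single j 1) = Pi.single i 1 := by
  have hee : φ (Pi.single i 1) * φ (Pi.single i 1) = φ (Pi.single i 1) := by
    rw [← map_mul, mul_single_self]
  have hne : φ (Pi.single i 1) ≠ 0 := by
    intro h
    have h0 : φ 0 = 0 := mulaut_map_zero φ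
    exact single_one_ne_zero i (φ.injective (h.trans h0.symm))
  have hex : ∃ j, φ (Pi.single i 1) j ≠ 0 := by
    by_contra h
    push_neg at h
    exact hne (funext fun j => h j)
  obtain ⟨j, hj0⟩ := hex
  have hj1 : φ (Pi.single i 1) j = 1 := by
    rcases hidem j _ (by simpa using congrFun hee j) with h | h
    · exact absurd h hj0
    · exact h
  have hkey : Pi.single j (1 : M j) * φ (Pi.single i 1) = Pi.single j 1 :=
    single_one_mul_of_eq_one hj1
  have hfi : φ.symm (Pi.single j 1) * Pi.single i 1 = φ.symm (Pi.single j 1) := by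
    have h2 : φ.symm (Pi.single j 1 * φ (Pi.single i 1)) = φ.symm (Pi.single j 1) := by
      rw [hkey]
    rwa [map_mul, MulEquiv.symm_apply_apply] at h2
  have hfs : φ.symm (Pi.single j 1) = Pi.single i (φ.symm (Pi.single j 1) i) :=
    eq_single_of_mul_single hfi
  have hfne : φ.symm (Pi.single j 1) ≠ 0 := by
    intro h
    have h0 : φ.symm 0 = 0 := mulaut_map_zero φ.symm
    exact single_one_ne_zero j (φ.symm.injective (h.trans h0.symm))
  have hff : φ.symm (Pi.single j 1) * φ.symm (Pi.single j 1) = φ.symm (Pi.single j 1) := by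
    rw [← map_mul, mul_single_self]
  have hfi1 : φ.symm (Pi.single j 1) i = 1 := by
    rcases hidem i _ (by simpa using congrFun hff i) with h | h
    · exact absurd (hfs.trans (by rw [h, Pi.single_zero])) hfne
    · exact h
  have hsymm : φ.symm (Pi.single j 1) = Pi.single i 1 := by rw [hfs, hfi1]
  refine ⟨j, ?_, hsymm⟩
  have := congrArg φ hsymm
  rw [MulEquiv.apply_symm_apply] at this
  exact this.symm

include hidem in
lemma single_eq_self [∀ i, Fintype (M i)]
    (hcard : ∀ i j : ι, Fintype.card (M i) = Fintype.card (M j) → i = j)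
    (φ : MulAut (∀ i, M i)) (i : ι) : φ (Pi.single i 1) = Pi.single i 1 := by
  obtain ⟨j, hj, hjs⟩ := exists_single_eq hidem φ i
  -- the map x ↦ φ (single i x) j is a bijection M i → M j
  have hsupp : ∀ x : M i, φ (Pi.single i x) = Pi.single j (φ (Pi.single i x) j) := by
    intro x
    apply eq_single_of_mul_single
    have : φ (Pi.single i x * Pi.single i 1) = φ (Pi.single i x) := by
      rw [mul_single_self]
    rwa [map_mul, hj] at this
  have hbij : Function.Bijective (fun x : M i => φ (Pi.single i x) j) := by
    constructor
    · intro x y hxy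
      simp only at hxy
      have : φ (Pi.single i x) = φ (Pi.single i y) := by
        rw [hsupp x, hsupp y, hxy]
      have h2 := φ.injective this
      have := congrFun h2 i
      simpa using this
    · intro y
      have h1 : Pi.single j y * Pi.single j (1 : M j) = Pi.single j y := mul_single_self j y
      have h2 : φ.symm (Pi.single j y) * Pi.single i 1 = φ.symm (Pi.single j y) := by
        have := congrArg φ.symm h1
        rwa [map_mul, hjs] at this
      have h3 : φ.symm (Pi.single j y) = Pi.single i (φ.symm (Pi.single j y) i) :=
        eq_single_of_mul_single h2
      refine ⟨φ.symm (Pi.single j y) i, ?_⟩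
      have h4 : φ (Pi.single i (φ.symm (Pi.single j y) i)) = Pi.single j y := by
        rw [← h3, MulEquiv.apply_symm_apply]
      show φ (Pi.single i (φ.symm (Pi.single j y) i)) j = y
      rw [h4]
      simp
  have : i = j := hcard i j (Fintype.card_of_bijective hbij)
  rw [hj, this]

/-- The key abstract statement: for a finite family of finite nontrivial monoids with zero,
all of whose idempotents are trivial and whose cardinalities are pairwise distinct,
the automorphism group of the product monoid is the product of the automorphism groups. -/
def piMulAutEquiv [Fintype ι] [∀ i, Fintype (M i)]
    (hcard : ∀ i j : ι, Fintype.card (M i) = Fintype.card (M j) → i = j) :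
    MulAut (∀ i, M i) ≃* ∀ i, MulAut (M i) where
  toFun φ i :=
    { toFun := fun x => φ (Pi.single i x) i
      invFun := fun x => φ.symm (Pi.single i x) i
      left_inv := by
        intro x
        show φ.symm (Pi.single i (φ (Pi.single i x) i)) i = x
        have hs : φ (Pi.single i x) = Pi.single i (φ (Pi.single i x) i) := by
          apply eq_single_of_mul_single
          have : φ (Pi.single i x * Pi.single i 1) = φ (Pi.single i x) := by
            rw [mul_single_self]
          rwa [map_mul, single_eq_self hidem hcard φ i] at this
        rw [← hs, MulEquiv.symm_apply_apply]
        simp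
      right_inv := by
        intro x
        show φ (Pi.single i (φ.symm (Pi.single i x) i)) i = x
        have hs : φ.symm (Pi.single i x) = Pi.single i (φ.symm (Pi.single i x) i) := by
          apply eq_single_of_mul_single
          have : φ.symm (Pi.single i x * Pi.single i 1) = φ.symm (Pi.single i x) := by
            rw [mul_single_self]
          have hsy : φ.symm (Pi.single i 1) = Pi.single i 1 := by
            have := congrArg φ.symm (single_eq_self hidem hcard φ i)
            rw [MulEquiv.symm_apply_apply] at this
            exact this.symm
          rwa [map_mul, hsy] at this
        rw [← hs, MulEquiv.apply_symm_apply]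
        simp
      map_mul' := by
        intro x y
        show φ (Pi.single i (x * y)) i = φ (Pi.single i x) i * φ (Pi.single i y) i
        rw [← single_mul_single, map_mul]
        simp }
  invFun g := MulEquiv.piCongrRight g
  left_inv := by
    intro φ
    refine MulEquiv.ext fun x => funext fun i => ?_
    show φ (Pi.single i (x i)) i = φ x i
    have hx : x * Pi.single i 1 = Pi.single i (x i) := by
      funext k
      by_cases hk : k = i
      · subst hk; simp
      · simp [Pi.single_eq_of_ne hk]
    have : φ x * φ (Pi.single i 1) = φ (Pi.single i (x i)) := by
      rw [← map_mul, hx]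
    rw [single_eq_self hidem hcard φ i] at this
    have := congrFun this i
    simpa using this.symm
  right_inv := by
    intro g
    funext i
    refine MulEquiv.ext fun x => ?_
    show MulEquiv.piCongrRight g (Pi.single i x) i = g i x
    simp
  map_mul' := by
    intro φ ψ
    funext i
    refine MulEquiv.ext fun x => ?_
    show (φ * ψ) (Pi.single i x) i = φ (Pi.single i (ψ (Pi.single i x) i)) i
    have hs : ψ (Pi.single i x) = Pi.single i (ψ (Pi.single i x) i) := by
      apply eq_single_of_mul_single
      have : ψ (Pi.single i x * Pi.single i 1) = ψ (Pi.single i x) := by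
        rw [mul_single_self]
      rwa [map_mul, single_eq_self hidem hcard ψ i] at this
    show φ (ψ (Pi.single i x)) i = _
    rw [← hs]

end PiAux

/-- Transfer `MulAut` along a multiplicative equivalence of monoids. -/
def mulAutCongrOfMulEquiv {A B : Type*} [Monoid A] [Monoid B] (e : A ≃* B) :
    MulAut A ≃* MulAut B where
  toFun f := (e.symm.trans f).trans e
  invFun g := (e.trans g).trans e.symm
  left_inv f := by ext x; simp
  right_inv g := by ext x; simp
  map_mul' f g := by
    ext x
    simp [MulAut.mul_apply]

lemma zmod_prime_pow_idem {p : ℕ} (hp : p.Prime) (e : ℕ) (x : ZMod (p ^ e)) (hx : x * x = x) :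
    x = 0 ∨ x = 1 := by
  rcases Nat.eq_zero_or_pos e with he | he
  · subst he
    left
    haveI : Subsingleton (ZMod (p ^ 0)) := by rw [pow_zero]; infer_instance
    exact Subsingleton.elim x 0
  haveI : NeZero (p ^ e) := ⟨pow_ne_zero e hp.pos.ne'⟩
  set a : ℤ := (x.val : ℤ) with ha
  have hxa : ((a : ℤ) : ZMod (p ^ e)) = x := by
    rw [ha]
    push_cast
    exact ZMod.natCast_rightInverse x
  have hdvd : ((p : ℤ) ^ e) ∣ a * (a - 1) := by
    have h0 : ((a * (a - 1) : ℤ) : ZMod (p ^ e)) = 0 := by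
      push_cast
      rw [hxa, mul_sub, mul_one, hx, sub_self]
    have := (ZMod.intCast_zmod_eq_zero_iff_dvd (a * (a - 1)) (p ^ e)).mp h0
    push_cast at this
    exact this
  have hpz : Prime (p : ℤ) := Nat.prime_iff_prime_int.mp hp
  by_cases hpa : (p : ℤ) ∣ a
  · -- p ∤ a - 1, so p^e ∣ a, so x = 0
    have hnd : ¬ (p : ℤ) ∣ (a - 1) := by
      intro h
      have : (p : ℤ) ∣ 1 := by
        have := dvd_sub hpa h
        simpa using this
      exact hpz.not_unit (isUnit_of_dvd_one this)
    have hcop : IsCoprime ((p : ℤ) ^ e) (a - 1) :=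
      (IsCoprime.pow_left ((hpz.irreducible.coprime_iff_not_dvd).mpr hnd))
    have : ((p : ℤ) ^ e) ∣ a := hcop.dvd_of_dvd_mul_right hdvd
    left
    rw [← hxa]
    rw [ZMod.intCast_zmod_eq_zero_iff_dvd]
    push_cast
    exact this
  · have hcop : IsCoprime ((p : ℤ) ^ e) a :=
      (IsCoprime.pow_left ((hpz.irreducible.coprime_iff_not_dvd).mpr hpa))
    have : ((p : ℤ) ^ e) ∣ (a - 1) := hcop.dvd_of_dvd_mul_left hdvd
    right
    have h1 : ((a - 1 : ℤ) : ZMod (p ^ e)) = 0 := by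
      rw [ZMod.intCast_zmod_eq_zero_iff_dvd]
      push_cast
      exact this
    push_cast at h1
    rw [hxa, sub_eq_zero] at h1
    exact h1

theorem stmt_19 (n : ℕ) (hn : 0 < n) :
    Nonempty (MulAut (ZMod n) ≃*
      ((p : n.primeFactors) → MulAut (ZMod ((p : ℕ) ^ n.factorization (p : ℕ))))) := by
  classical
  set a : n.primeFactors → ℕ := fun p => (p : ℕ) ^ n.factorization (p : ℕ) with ha
  have hp : ∀ p : n.primeFactors, (p : ℕ).Prime := fun p => Nat.prime_of_mem_primeFactors p.2
  have hfe : ∀ p : n.primeFactors, n.factorization (p : ℕ) ≠ 0 := by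
    intro p
    rw [← Finsupp.mem_support_iff, Nat.support_factorization]
    exact p.2
  have hlt : ∀ p : n.primeFactors, 1 < a p := fun p =>
    Nat.one_lt_pow (hfe p) (hp p).one_lt
  haveI hNZ : ∀ p : n.primeFactors, NeZero (a p) := fun p => ⟨by have := hlt p; omega⟩
  haveI hFin : ∀ p : n.primeFactors, Fintype (ZMod (a p)) := fun p => @ZMod.fintype _ (hNZ p)
  haveI hNT : ∀ p : n.primeFactors, Nontrivial (ZMod (a p)) := fun p =>
    @ZMod.nontrivial _ ⟨hlt p⟩
  have hcop : Pairwise (Function.onFun Nat.Coprime a) := by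
    intro p q hne
    simp only [Function.onFun, ha]
    exact Nat.Coprime.pow _ _ ((Nat.coprime_primes (hp p) (hp q)).mpr
      (fun h => hne (Subtype.ext h)))
  have hprod : ∏ p : n.primeFactors, a p = n := by
    simp only [ha]
    rw [Finset.prod_coe_sort n.primeFactors (fun m => m ^ n.factorization m),
      ← Nat.prod_factorization_eq_prod_primeFactors]
    exact Nat.factorization_prod_pow_eq_self hn.ne'
  have e1 := ZMod.prodEquivPi a hcop
  rw [hprod] at e1
  have hidem : ∀ p : n.primeFactors, ∀ x : ZMod (a p), x * x = x → x = 0 ∨ x = 1 :=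
    fun p => zmod_prime_pow_idem (hp p) _
  have hcard : ∀ p q : n.primeFactors,
      Fintype.card (ZMod (a p)) = Fintype.card (ZMod (a q)) → p = q := by
    intro p q h
    rw [@ZMod.card _ (hFin p), @ZMod.card _ (hFin q)] at h
    simp only [ha] at h
    have hdvd : (p : ℕ) ∣ (q : ℕ) ^ n.factorization (q : ℕ) := by
      rw [← h]
      exact dvd_pow_self _ (hfe p)
    have := ((Nat.prime_dvd_prime_iff_eq (hp p) (hp q)).mp
      ((hp p).dvd_of_dvd_pow hdvd))
    exact Subtype.ext this
  exact ⟨(mulAutCongrOfMulEquiv e1.toMulEquiv).trans (piMulAutEquiv hidem hcard)⟩
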